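/- For all x ≥ 0, 1 − e^{−x} ≤ x, and consequently for one-dimensional Gaussian measures ψ_a, ψ_b with means a, b and common variance β², the MMD with respect to the Gaussian kernel of bandwidth ζ satisfies ρ(ψ_a, ψ_b) ≤ |a − b| · (2/η)^{1/2} · (ζ/η)^{1/4}, where η = 4β² + ζ. -/

import Mathlib

open MeasureTheory Real

/-- Density of a 1-D Gaussian with mean `a` and variance `β²`. -/
noncomputable def gaussDensity (β a x : ℝ) : ℝ :=
  (2 * Real.pi * β ^ 2) ^ (-(1 : ℝ) / 2) * Real.exp (-(x - a) ^ 2 / (2 * β ^ 2))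

/-- Squared MMD between the Gaussians with means `a`, `b` and variance `β²`
with respect to the Gaussian kernel of bandwidth `ζ`. -/
noncomputable def gaussMMD2 (β ζ a b : ℝ) : ℝ :=
  (∫ x : ℝ, ∫ y : ℝ, Real.exp (-(x - y) ^ 2 / ζ) * gaussDensity β a x * gaussDensity β a y)
  + (∫ x : ℝ, ∫ y : ℝ, Real.exp (-(x - y) ^ 2 / ζ) * gaussDensity β b x * gaussDensity β b y)
  - 2 * ∫ x : ℝ, ∫ y : ℝ, Real.exp (-(x - y) ^ 2 / ζ) * gaussDensity β a x * gaussDensity β b y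

lemma gauss_prod (p q u v : ℝ) (hp : 0 < p) (hq : 0 < q) :
    ∫ x : ℝ, Real.exp (-(x - u) ^ 2 / p) * Real.exp (-(x - v) ^ 2 / q)
      = Real.sqrt (Real.pi * (p * q / (p + q))) * Real.exp (-(u - v) ^ 2 / (p + q)) := by
  have hpq : 0 < p + q := by linarith
  set s : ℝ := (p + q) / (p * q) with hs
  have hs0 : 0 < s := div_pos hpq (mul_pos hp hq)
  set m : ℝ := (q * u + p * v) / (p + q) with hm
  have key : ∀ x : ℝ, Real.exp (-(x - u) ^ 2 / p) * Real.exp (-(x - v) ^ 2 / q)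
      = Real.exp (-s * (x - m) ^ 2) * Real.exp (-(u - v) ^ 2 / (p + q)) := by
    intro x
    rw [← Real.exp_add, ← Real.exp_add]
    congr 1
    rw [hs, hm]
    field_simp
    ring
  simp_rw [key]
  rw [MeasureTheory.integral_mul_const]
  congr 1
  rw [show (∫ x : ℝ, Real.exp (-s * (x - m) ^ 2)) = Real.sqrt (Real.pi / s) by
    rw [← integral_gaussian s]
    exact integral_sub_right_eq_self (fun x => Real.exp (-s * x ^ 2)) m]
  congr 1
  rw [hs]
  field_simp

lemma cross (β ζ a b : ℝ) (hβ : 0 < β) (hζ : 0 < ζ) :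
    (∫ x : ℝ, ∫ y : ℝ, Real.exp (-(x - y) ^ 2 / ζ) * gaussDensity β a x * gaussDensity β b y)
      = Real.sqrt (ζ / (4 * β ^ 2 + ζ)) * Real.exp (-(a - b) ^ 2 / (4 * β ^ 2 + ζ)) := by
  have hβ2 : (0:ℝ) < 2 * β ^ 2 := by positivity
  have hC : (0:ℝ) < 2 * Real.pi * β ^ 2 := by positivity
  set C : ℝ := (2 * Real.pi * β ^ 2) ^ (-(1:ℝ)/2) with hCdef
  set S1 : ℝ := Real.sqrt (Real.pi * (ζ * (2 * β ^ 2) / (ζ + 2 * β ^ 2))) with hS1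
  have step1 : ∀ x : ℝ,
      (∫ y : ℝ, Real.exp (-(x - y) ^ 2 / ζ) * gaussDensity β a x * gaussDensity β b y)
      = (gaussDensity β a x * C * S1) * Real.exp (-(x - b) ^ 2 / (ζ + 2 * β ^ 2)) := by
    intro x
    have h1 : ∀ y : ℝ, Real.exp (-(x - y) ^ 2 / ζ) * gaussDensity β a x * gaussDensity β b y
        = (gaussDensity β a x * C) *
          (Real.exp (-(y - x) ^ 2 / ζ) * Real.exp (-(y - b) ^ 2 / (2 * β ^ 2))) := by
      intro y
      simp only [gaussDensity, hCdef]
      rw [show (x - y) ^ 2 = (y - x) ^ 2 by ring]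
      ring
    simp_rw [h1]
    rw [MeasureTheory.integral_const_mul, gauss_prod ζ (2 * β ^ 2) x b hζ hβ2, hS1]
    ring
  simp_rw [step1]
  have h2 : ∀ x : ℝ, (gaussDensity β a x * C * S1) * Real.exp (-(x - b) ^ 2 / (ζ + 2 * β ^ 2))
      = (C * C * S1) *
        (Real.exp (-(x - a) ^ 2 / (2 * β ^ 2)) * Real.exp (-(x - b) ^ 2 / (ζ + 2 * β ^ 2))) := by
    intro x
    simp only [gaussDensity, hCdef]
    ring
  simp_rw [h2]
  rw [MeasureTheory.integral_const_mul,
    gauss_prod (2 * β ^ 2) (ζ + 2 * β ^ 2) a b hβ2 (by linarith)]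
  rw [show (2 * β ^ 2 + (ζ + 2 * β ^ 2)) = 4 * β ^ 2 + ζ by ring]
  rw [← mul_assoc]
  congr 1
  -- C * C * S1 * S2 = sqrt (ζ / (4β²+ζ))
  have hCC : C * C = (2 * Real.pi * β ^ 2)⁻¹ := by
    rw [hCdef, ← Real.rpow_add hC, show (-(1:ℝ)/2 + -(1:ℝ)/2) = -1 by norm_num,
      Real.rpow_neg_one]
  rw [hCC, hS1, mul_assoc, ← Real.sqrt_mul (by positivity)]
  rw [show Real.pi * (ζ * (2 * β ^ 2) / (ζ + 2 * β ^ 2)) *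
        (Real.pi * (2 * β ^ 2 * (ζ + 2 * β ^ 2) / (4 * β ^ 2 + ζ)))
      = (2 * Real.pi * β ^ 2) ^ 2 * (ζ / (4 * β ^ 2 + ζ)) by
    field_simp]
  rw [Real.sqrt_mul (by positivity), Real.sqrt_sq hC.le]
  rw [inv_mul_cancel_left₀ (ne_of_gt hC)]

/-- `1 − e^{−x} ≤ x` for `x ≥ 0`, and the resulting Lipschitz-type bound on the
MMD between equal-variance Gaussians: with `η = 4β² + ζ`,
`ρ(ψ_a, ψ_b) ≤ |a − b|·(2/η)^{1/2}·(ζ/η)^{1/4}`. -/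
theorem stmt_14 (β ζ a b : ℝ) (hβ : 0 < β) (hζ : 0 < ζ) :
    (∀ x : ℝ, 0 ≤ x → 1 - Real.exp (-x) ≤ x) ∧
      Real.sqrt (gaussMMD2 β ζ a b)
        ≤ |a - b| * (2 / (4 * β ^ 2 + ζ)) ^ ((1 : ℝ) / 2) *
            (ζ / (4 * β ^ 2 + ζ)) ^ ((1 : ℝ) / 4) := by
  have hone : ∀ x : ℝ, 0 ≤ x → 1 - Real.exp (-x) ≤ x := by
    intro x hx
    have := Real.add_one_le_exp (-x)
    linarith
  refine ⟨hone, ?_⟩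
  have hη : (0:ℝ) < 4 * β ^ 2 + ζ := by positivity
  set η : ℝ := 4 * β ^ 2 + ζ with hηdef
  set S : ℝ := Real.sqrt (ζ / η) with hSdef
  have hS0 : 0 ≤ S := Real.sqrt_nonneg _
  have hmmd : gaussMMD2 β ζ a b = 2 * S * (1 - Real.exp (-(a - b) ^ 2 / η)) := by
    rw [gaussMMD2, cross β ζ a a hβ hζ, cross β ζ b b hβ hζ, cross β ζ a b hβ hζ]
    simp only [sub_self, ← hηdef, ← hSdef]
    norm_num
    ring
  have hx : (0:ℝ) ≤ (a - b) ^ 2 / η := by positivity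
  have h1 : 1 - Real.exp (-(a - b) ^ 2 / η) ≤ (a - b) ^ 2 / η := by
    have := hone ((a - b) ^ 2 / η) hx
    rw [← neg_div] at this
    exact this
  have hbound : gaussMMD2 β ζ a b ≤ (a - b) ^ 2 * (2 / η) * S := by
    rw [hmmd]
    calc 2 * S * (1 - Real.exp (-(a - b) ^ 2 / η))
        ≤ 2 * S * ((a - b) ^ 2 / η) := by
          apply mul_le_mul_of_nonneg_left h1 (by positivity)
      _ = (a - b) ^ 2 * (2 / η) * S := by ring
  calc Real.sqrt (gaussMMD2 β ζ a b)
      ≤ Real.sqrt ((a - b) ^ 2 * (2 / η) * S) := Real.sqrt_le_sqrt hbound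
    _ = |a - b| * (2 / η) ^ ((1:ℝ) / 2) * (ζ / η) ^ ((1:ℝ) / 4) := by
        rw [Real.sqrt_mul (by positivity), Real.sqrt_mul (sq_nonneg _),
          Real.sqrt_sq_eq_abs]
        congr 1
        · congr 1
          rw [Real.rpow_def_of_pos (by positivity)]
          rw [Real.sqrt_eq_rpow, Real.rpow_def_of_pos (by positivity)]
        · rw [hSdef, show ((1:ℝ)/4) = (1:ℝ)/2 * ((1:ℝ)/2) by norm_num,
            Real.rpow_mul (by positivity), ← Real.sqrt_eq_rpow, ← Real.sqrt_eq_rpow]
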